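/- arXiv:2203.14089 — 2 statements merged into one kernel-verified Lean document; each statement's English description precedes it below -/
import Mathlib

section
/- For every shape parameter ε > 0, every d ≥ 1, and every finite set of pairwise distinct points x_1, …, x_N ∈ ℝ^d, the inverse multiquadric kernel matrix A with entries A_{ij} = (1 + ε² ‖x_i − x_j‖²)^{−1/2} (Euclidean norm) is symmetric positive definite. -/
open Matrix MeasureTheory Set Finset Filter

namespace IMQAux


lemma real_exp_tsum (s : ℝ) : Real.exp s = ∑' n : ℕ, s ^ n / (Nat.factorial n : ℝ) := by
  rw [Real.exp_eq_exp_ℝ, NormedSpace.exp_eq_tsum_div]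

variable {d N : ℕ}

lemma inner_pow_sum_nonneg (b : Fin N → ℝ) (y : Fin N → EuclideanSpace ℝ (Fin d)) (n : ℕ) :
    0 ≤ ∑ p : Fin N × Fin N,
      b p.1 * b p.2 * (inner ℝ (y p.1) (y p.2) : ℝ) ^ n := by
  have h : ∀ i j : Fin N, (inner ℝ (y i) (y j) : ℝ) ^ n =
      ∑ q ∈ Fintype.piFinset (fun _ : Fin n => (Finset.univ : Finset (Fin d))),
        (∏ m, y i (q m)) * ∏ m, y j (q m) := by
    intro i j
    have h0 : (inner ℝ (y i) (y j) : ℝ) = ∑ k, y i k * y j k := by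
      simp [PiLp.inner_apply, RCLike.inner_apply, starRingEnd_apply]
      exact Finset.sum_congr rfl fun k _ => mul_comm _ _
    rw [h0, Finset.sum_pow']
    exact Finset.sum_congr rfl fun q _ => by rw [Finset.prod_mul_distrib]
  have key : ∑ p : Fin N × Fin N, b p.1 * b p.2 * (inner ℝ (y p.1) (y p.2) : ℝ) ^ n
      = ∑ q ∈ Fintype.piFinset (fun _ : Fin n => (Finset.univ : Finset (Fin d))),
          (∑ i, b i * ∏ m, y i (q m)) ^ 2 := by
    calc ∑ p : Fin N × Fin N, b p.1 * b p.2 * (inner ℝ (y p.1) (y p.2) : ℝ) ^ n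
        = ∑ i, ∑ j, b i * b j * (inner ℝ (y i) (y j) : ℝ) ^ n := by rw [Fintype.sum_prod_type]
      _ = ∑ i, ∑ j, ∑ q ∈ Fintype.piFinset (fun _ : Fin n => (Finset.univ : Finset (Fin d))),
            (b i * ∏ m, y i (q m)) * (b j * ∏ m, y j (q m)) := by
          refine Finset.sum_congr rfl fun i _ => Finset.sum_congr rfl fun j _ => ?_
          rw [h, Finset.mul_sum]
          exact Finset.sum_congr rfl fun q _ => by ring
      _ = ∑ i, ∑ q ∈ Fintype.piFinset (fun _ : Fin n => (Finset.univ : Finset (Fin d))), ∑ j,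
            (b i * ∏ m, y i (q m)) * (b j * ∏ m, y j (q m)) :=
          Finset.sum_congr rfl fun i _ => Finset.sum_comm
      _ = ∑ q ∈ Fintype.piFinset (fun _ : Fin n => (Finset.univ : Finset (Fin d))), ∑ i, ∑ j,
            (b i * ∏ m, y i (q m)) * (b j * ∏ m, y j (q m)) := Finset.sum_comm
      _ = ∑ q ∈ Fintype.piFinset (fun _ : Fin n => (Finset.univ : Finset (Fin d))),
            (∑ i, b i * ∏ m, y i (q m)) ^ 2 := by
          refine Finset.sum_congr rfl fun q _ => ?_
          rw [sq, Finset.sum_mul_sum]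
  rw [key]
  exact Finset.sum_nonneg fun q _ => sq_nonneg _

lemma gaussian_psd (y : Fin N → EuclideanSpace ℝ (Fin d)) (c : Fin N → ℝ) {t : ℝ} (ht : 0 ≤ t) :
    0 ≤ ∑ p : Fin N × Fin N, c p.1 * c p.2 * Real.exp (-(t * ‖y p.1 - y p.2‖ ^ 2)) := by
  set b : Fin N → ℝ := fun i => c i * Real.exp (-(t * ‖y i‖ ^ 2)) with hb
  have hsplit : ∀ i j : Fin N, c i * c j * Real.exp (-(t * ‖y i - y j‖ ^ 2))
      = b i * b j * Real.exp (2 * t * (inner ℝ (y i) (y j) : ℝ)) := by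
    intro i j
    have hn : ‖y i - y j‖ ^ 2 = ‖y i‖ ^ 2 - 2 * (inner ℝ (y i) (y j) : ℝ) + ‖y j‖ ^ 2 :=
      norm_sub_sq_real (y i) (y j)
    have he : Real.exp (-(t * ‖y i - y j‖ ^ 2))
        = Real.exp (-(t * ‖y i‖ ^ 2)) * Real.exp (-(t * ‖y j‖ ^ 2)) *
          Real.exp (2 * t * (inner ℝ (y i) (y j) : ℝ)) := by
      rw [← Real.exp_add, ← Real.exp_add, hn]; congr 1; ring
    rw [he, hb]; ring
  have hrw : ∑ p : Fin N × Fin N, c p.1 * c p.2 * Real.exp (-(t * ‖y p.1 - y p.2‖ ^ 2))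
      = ∑ p : Fin N × Fin N, b p.1 * b p.2 * Real.exp (2 * t * (inner ℝ (y p.1) (y p.2) : ℝ)) :=
    Finset.sum_congr rfl fun p _ => hsplit p.1 p.2
  rw [hrw]
  have hsum : ∀ p : Fin N × Fin N,
      Summable (fun n : ℕ =>
        b p.1 * b p.2 * ((2 * t * (inner ℝ (y p.1) (y p.2) : ℝ)) ^ n / (Nat.factorial n : ℝ))) :=
    fun p => (Real.summable_pow_div_factorial _).mul_left _
  have hswap : ∑ p : Fin N × Fin N, b p.1 * b p.2 * Real.exp (2 * t * (inner ℝ (y p.1) (y p.2) : ℝ))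
      = ∑' n : ℕ, ∑ p : Fin N × Fin N,
          b p.1 * b p.2 * ((2 * t * (inner ℝ (y p.1) (y p.2) : ℝ)) ^ n / (Nat.factorial n : ℝ)) := by
    rw [Summable.tsum_finsetSum (fun p _ => hsum p)]
    refine Finset.sum_congr rfl fun p _ => ?_
    rw [real_exp_tsum, ← tsum_mul_left]
  rw [hswap]
  refine tsum_nonneg fun n => ?_
  have h1 : ∑ p : Fin N × Fin N,
      b p.1 * b p.2 * ((2 * t * (inner ℝ (y p.1) (y p.2) : ℝ)) ^ n / (Nat.factorial n : ℝ))
      = ((2 * t) ^ n / (Nat.factorial n : ℝ)) *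
        ∑ p : Fin N × Fin N, b p.1 * b p.2 * (inner ℝ (y p.1) (y p.2) : ℝ) ^ n := by
    rw [Finset.mul_sum]
    refine Finset.sum_congr rfl fun p _ => ?_
    rw [mul_pow]; ring
  rw [h1]
  have h2 : (0:ℝ) ≤ (2 * t) ^ n / (Nat.factorial n : ℝ) := by positivity
  exact mul_nonneg h2 (inner_pow_sum_nonneg b y n)


lemma rep {u : ℝ} (hu : 0 ≤ u) :
    (1 + u) ^ (-(1 / 2 : ℝ)) = (Real.Gamma (1 / 2))⁻¹ *
      ∫ t in Ioi (0 : ℝ), t ^ (-(1 / 2) : ℝ) * Real.exp (-((1 + u) * t)) := by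
  have h1 : (0 : ℝ) < 1 + u := by linarith
  have h := Real.integral_rpow_mul_exp_neg_mul_Ioi (a := 1 / 2) (r := 1 + u) one_half_pos h1
  have h2 : (1 / 2 : ℝ) - 1 = -(1 / 2) := by norm_num
  rw [h2] at h
  rw [h, one_div (1 + u), Real.inv_rpow h1.le, ← Real.rpow_neg h1.le,
    mul_comm ((1 + u) ^ (-(1 / 2) : ℝ)) (Real.Gamma (1 / 2)), ← mul_assoc,
    inv_mul_cancel₀ (Real.Gamma_pos_of_pos one_half_pos).ne', one_mul]

lemma integrable_kernel {r : ℝ} (hr : 0 < r) :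
    IntegrableOn (fun t : ℝ => t ^ (-(1 / 2) : ℝ) * Real.exp (-(r * t))) (Ioi 0) := by
  have h := integrableOn_rpow_mul_exp_neg_mul_rpow (p := 1) (s := -(1 / 2)) (b := r)
    (by norm_num) one_pos hr
  refine h.congr_fun (fun t ht => ?_) measurableSet_Ioi
  simp only [Real.rpow_one, neg_mul]

theorem main {d N : ℕ} (hd : 1 ≤ d) (ε : ℝ) (hε : 0 < ε)
    (x : Fin N → EuclideanSpace ℝ (Fin d)) (hx : Function.Injective x)
    (c : Fin N → ℝ) (hc : c ≠ 0) :
    0 < ∑ p : Fin N × Fin N,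
      c p.1 * c p.2 * (1 + ε ^ 2 * ‖x p.1 - x p.2‖ ^ 2) ^ (-(1 / 2 : ℝ)) := by
  classical
  set r : Fin N × Fin N → ℝ := fun p => 1 + ε ^ 2 * ‖x p.1 - x p.2‖ ^ 2 with hrdef
  have hr1 : ∀ p, (1 : ℝ) ≤ r p := fun p => by
    have : (0:ℝ) ≤ ε ^ 2 * ‖x p.1 - x p.2‖ ^ 2 := by positivity
    simp only [hrdef]; linarith
  have hr0 : ∀ p, (0 : ℝ) < r p := fun p => lt_of_lt_of_le one_pos (hr1 p)
  -- the nonneg Gaussian quadratic form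
  set G : ℝ → ℝ := fun t => ∑ p : Fin N × Fin N,
    c p.1 * c p.2 * Real.exp (-(ε ^ 2 * t * ‖x p.1 - x p.2‖ ^ 2)) with hGdef
  have hGnn : ∀ t : ℝ, 0 ≤ t → 0 ≤ G t := by
    intro t ht
    exact gaussian_psd x c (mul_nonneg (sq_nonneg ε) ht)
  -- integrand
  set F : ℝ → ℝ := fun t => ∑ p : Fin N × Fin N,
    c p.1 * c p.2 * (t ^ (-(1 / 2) : ℝ) * Real.exp (-(r p * t))) with hFdef
  have hg_int : ∀ p : Fin N × Fin N, IntegrableOn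
      (fun t : ℝ => c p.1 * c p.2 * (t ^ (-(1 / 2) : ℝ) * Real.exp (-(r p * t)))) (Ioi 0) := by
    intro p
    exact (integrable_kernel (hr0 p)).const_mul _
  have hF_int : IntegrableOn F (Ioi 0) := by
    apply integrable_finset_sum
    intro p _
    exact hg_int p
  have hQ : ∑ p : Fin N × Fin N, c p.1 * c p.2 * (r p) ^ (-(1 / 2 : ℝ))
      = (Real.Gamma (1 / 2))⁻¹ * ∫ t in Ioi (0:ℝ), F t := by
    have step1 : ∀ p : Fin N × Fin N, c p.1 * c p.2 * (r p) ^ (-(1 / 2 : ℝ))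
        = (Real.Gamma (1 / 2))⁻¹ *
          ∫ t in Ioi (0:ℝ), c p.1 * c p.2 * (t ^ (-(1 / 2) : ℝ) * Real.exp (-(r p * t))) := by
      intro p
      have hu : (0:ℝ) ≤ ε ^ 2 * ‖x p.1 - x p.2‖ ^ 2 := by positivity
      have := rep hu
      rw [hrdef]; dsimp only
      rw [this, MeasureTheory.integral_const_mul]
      ring
    rw [Finset.sum_congr rfl fun p _ => step1 p, ← Finset.mul_sum]
    congr 1
    rw [← MeasureTheory.integral_finset_sum Finset.univ (fun p _ => hg_int p)]
  -- pointwise form of F on Ioi 0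
  have hFt : ∀ t ∈ Ioi (0:ℝ), F t = t ^ (-(1 / 2) : ℝ) * (Real.exp (-t) * G t) := by
    intro t ht
    simp only [hFdef, hGdef, Finset.mul_sum]
    refine Finset.sum_congr rfl fun p _ => ?_
    have he : Real.exp (-(r p * t))
        = Real.exp (-t) * Real.exp (-(ε ^ 2 * t * ‖x p.1 - x p.2‖ ^ 2)) := by
      rw [← Real.exp_add]; congr 1; simp only [hrdef]; ring
    rw [he]; ring
  have hFnn : ∀ t ∈ Ioi (0:ℝ), 0 ≤ F t := by
    intro t ht
    rw [hFt t ht]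
    have h1 : (0:ℝ) ≤ t ^ (-(1 / 2) : ℝ) := Real.rpow_nonneg (le_of_lt ht) _
    exact mul_nonneg h1 (mul_nonneg (Real.exp_nonneg _) (hGnn t (le_of_lt ht)))
  -- S and its positivity
  set S : ℝ := ∑ i, c i ^ 2 with hSdef
  have hS0 : 0 < S := by
    obtain ⟨i, hi⟩ : ∃ i, c i ≠ 0 := Function.ne_iff.mp hc
    exact Finset.sum_pos' (fun j _ => sq_nonneg _) ⟨i, Finset.mem_univ i, by positivity⟩
  -- G tends to S at infinity
  have hG_tendsto : Tendsto G atTop (nhds S) := by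
    have hSeq : S = ∑ p : Fin N × Fin N, (if p.1 = p.2 then c p.1 * c p.2 else 0) := by
      rw [Fintype.sum_prod_type]
      simp [Finset.sum_ite_eq, hSdef, pow_two]
    rw [hSeq, hGdef]
    apply tendsto_finset_sum
    intro p _
    by_cases hp : p.1 = p.2
    · have hzero : x p.1 - x p.2 = 0 := by rw [hp, sub_self]
      simp [hp, hzero]
    · have hxne : x p.1 ≠ x p.2 := fun h => hp (hx h)
      have hD : 0 < ‖x p.1 - x p.2‖ ^ 2 :=
        pow_pos (norm_pos_iff.mpr (sub_ne_zero_of_ne hxne)) 2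
      have ha : 0 < ε ^ 2 * ‖x p.1 - x p.2‖ ^ 2 := by positivity
      have harg : ∀ t : ℝ, ε ^ 2 * t * ‖x p.1 - x p.2‖ ^ 2
          = ε ^ 2 * ‖x p.1 - x p.2‖ ^ 2 * t := fun t => by ring
      simp only [harg, if_neg hp]
      have h1 : Tendsto (fun t : ℝ => ε ^ 2 * ‖x p.1 - x p.2‖ ^ 2 * t) atTop atTop :=
        Tendsto.const_mul_atTop ha tendsto_id
      have h2 : Tendsto (fun t : ℝ => Real.exp (-(ε ^ 2 * ‖x p.1 - x p.2‖ ^ 2 * t)))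
          atTop (nhds 0) := Real.tendsto_exp_neg_atTop_nhds_zero.comp h1
      have h3 := h2.const_mul (c p.1 * c p.2)
      simpa using h3
  -- eventually G ≥ S/2
  have hev : ∀ᶠ t in atTop, S / 2 ≤ G t :=
    hG_tendsto.eventually_const_le (by linarith)
  obtain ⟨T, hT⟩ := eventually_atTop.mp hev
  set T₀ : ℝ := max T 0 with hT₀def
  have hT₀0 : 0 ≤ T₀ := le_max_right _ _
  set C : ℝ := (T₀ + 1) ^ (-(1 / 2) : ℝ) * (Real.exp (-(T₀ + 1)) * (S / 2)) with hCdef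
  have hC0 : 0 < C := by
    have h1 : (0:ℝ) < T₀ + 1 := by linarith
    have : (0:ℝ) < (T₀ + 1) ^ (-(1 / 2) : ℝ) := Real.rpow_pos_of_pos h1 _
    positivity
  have hsub : Ioc T₀ (T₀ + 1) ⊆ Ioi (0:ℝ) := by
    intro t ht
    exact lt_of_le_of_lt hT₀0 ht.1
  have hbound : ∀ t ∈ Ioc T₀ (T₀ + 1), C ≤ F t := by
    intro t ht
    have ht0 : (0:ℝ) < t := hsub ht
    rw [hFt t ht0]
    have h1 : (T₀ + 1) ^ (-(1 / 2) : ℝ) ≤ t ^ (-(1 / 2) : ℝ) :=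
      Real.rpow_le_rpow_of_nonpos ht0 ht.2 (by norm_num)
    have h2 : Real.exp (-(T₀ + 1)) ≤ Real.exp (-t) :=
      Real.exp_le_exp.mpr (by linarith [ht.2])
    have h3 : S / 2 ≤ G t := hT t (le_trans (le_max_left T 0) (le_of_lt ht.1))
    have h4 : (0:ℝ) ≤ Real.exp (-(T₀ + 1)) * (S / 2) :=
      mul_nonneg (Real.exp_nonneg _) (by linarith)
    calc C = (T₀ + 1) ^ (-(1 / 2) : ℝ) * (Real.exp (-(T₀ + 1)) * (S / 2)) := hCdef
      _ ≤ t ^ (-(1 / 2) : ℝ) * (Real.exp (-t) * G t) := by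
          apply mul_le_mul h1 _ h4 (Real.rpow_nonneg ht0.le _)
          exact mul_le_mul h2 h3 (by linarith) (Real.exp_nonneg _)
  have hIoc_int : IntegrableOn F (Ioc T₀ (T₀ + 1)) := hF_int.mono_set hsub
  have hlow : C ≤ ∫ t in Ioc T₀ (T₀ + 1), F t := by
    have := MeasureTheory.setIntegral_ge_of_const_le (μ := volume) (c := C)
      measurableSet_Ioc (by simp [Real.volume_Ioc]) hbound hIoc_int
    have hvol : (volume (Ioc T₀ (T₀ + 1))).toReal = 1 := by
      rw [Real.volume_Ioc]
      norm_num
    rw [measureReal_def, hvol, smul_eq_mul, one_mul] at this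
    exact this
  have hmono : ∫ t in Ioc T₀ (T₀ + 1), F t ≤ ∫ t in Ioi (0:ℝ), F t := by
    apply MeasureTheory.setIntegral_mono_set hF_int
    · exact (ae_restrict_iff' measurableSet_Ioi).mpr (ae_of_all _ hFnn)
    · exact HasSubset.Subset.eventuallyLE hsub
  have hpos : 0 < ∫ t in Ioi (0:ℝ), F t := lt_of_lt_of_le hC0 (le_trans hlow hmono)
  have : ∑ p : Fin N × Fin N,
      c p.1 * c p.2 * (1 + ε ^ 2 * ‖x p.1 - x p.2‖ ^ 2) ^ (-(1 / 2 : ℝ))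
      = (Real.Gamma (1 / 2))⁻¹ * ∫ t in Ioi (0:ℝ), F t := hQ
  rw [this]
  exact mul_pos (inv_pos.mpr (Real.Gamma_pos_of_pos one_half_pos)) hpos
end IMQAux

open IMQAux in
/-- The inverse multiquadric kernel matrix on pairwise distinct points is
symmetric positive definite. -/
theorem inverse_multiquadric_kernel_matrix_posDef
    {d N : ℕ} (hd : 1 ≤ d) (ε : ℝ) (hε : 0 < ε)
    (x : Fin N → EuclideanSpace ℝ (Fin d)) (hx : Function.Injective x) :
    (Matrix.of fun i j : Fin N =>
      (1 + ε ^ 2 * ‖x i - x j‖ ^ 2) ^ (-(1 / 2 : ℝ))).IsSymm ∧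
    (Matrix.of fun i j : Fin N =>
      (1 + ε ^ 2 * ‖x i - x j‖ ^ 2) ^ (-(1 / 2 : ℝ))).PosDef := by
  constructor
  · ext i j
    simp only [Matrix.transpose_apply, Matrix.of_apply]
    rw [norm_sub_rev]
  rw [Matrix.posDef_iff_dotProduct_mulVec]
  constructor
  · ext i j
    simp only [Matrix.conjTranspose_apply, Matrix.of_apply, star_trivial]
    rw [norm_sub_rev]
  · intro c hc
    have hform : star c ⬝ᵥ ((Matrix.of fun i j : Fin N =>
        (1 + ε ^ 2 * ‖x i - x j‖ ^ 2) ^ (-(1 / 2 : ℝ))) *ᵥ c)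
        = ∑ p : Fin N × Fin N,
            c p.1 * c p.2 * (1 + ε ^ 2 * ‖x p.1 - x p.2‖ ^ 2) ^ (-(1 / 2 : ℝ)) := by
      simp only [dotProduct, mulVec, Pi.star_apply, star_trivial, Matrix.of_apply]
      rw [Fintype.sum_prod_type]
      refine Finset.sum_congr rfl fun i _ => ?_
      rw [Finset.mul_sum]
      exact Finset.sum_congr rfl fun j _ => by ring
    rw [hform]
    exact main hd ε hε x hx c hc
end

section
/- For every shape parameter ε > 0, every d ≥ 1, and every finite set of pairwise distinct points x_1, …, x_N ∈ ℝ^d, the Matérn C⁴ kernel matrix A with entries A_{ij} = exp(−ε r_{ij}) (ε² r_{ij}² + 3 ε r_{ij} + 3), where r_{ij} = ‖x_i − x_j‖ (Euclidean norm), is symmetric positive definite. -/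
open MeasureTheory Real Set Filter
open scoped ComplexConjugate RealInnerProductSpace

noncomputable section

namespace MaternProof


variable {d N : ℕ}

abbrev V (d : ℕ) := EuclideanSpace ℝ (Fin d)

/-- The characters `v ↦ exp(I ⟪w, v⟫)` as monoid homs. -/
def charMH (w : V d) : Multiplicative (V d) →* ℂ where
  toFun v := Complex.exp (Complex.I * (⟪w, v.toAdd⟫ : ℝ))
  map_one' := by simp
  map_mul' u v := by
    show Complex.exp (Complex.I * ((⟪w, Multiplicative.toAdd u + Multiplicative.toAdd v⟫ : ℝ) : ℂ)) = _
    rw [inner_add_right]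
    push_cast
    rw [mul_add, Complex.exp_add]

lemma charMH_injective : Function.Injective (charMH (d := d)) := by
  intro w₁ w₂ h
  by_contra hne
  have hww : w₁ - w₂ ≠ 0 := sub_ne_zero.mpr hne
  have hnz : ‖w₁ - w₂‖ ≠ 0 := norm_ne_zero_iff.mpr hww
  have hnorm : (0:ℝ) < ‖w₁ - w₂‖^2 := by positivity
  set v : V d := (Real.pi / ‖w₁ - w₂‖^2) • (w₁ - w₂) with hv
  have h1 : charMH w₁ (Multiplicative.ofAdd v) = charMH w₂ (Multiplicative.ofAdd v) := by rw [h]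
  simp only [charMH, MonoidHom.coe_mk, OneHom.coe_mk, toAdd_ofAdd] at h1
  have hinner : (⟪w₁, v⟫ : ℝ) - ⟪w₂, v⟫ = Real.pi := by
    rw [← inner_sub_left, hv, real_inner_smul_right, real_inner_self_eq_norm_sq]
    field_simp
  have : Complex.exp (Complex.I * (⟪w₁, v⟫:ℝ) - Complex.I * (⟪w₂, v⟫:ℝ)) = 1 := by
    rw [Complex.exp_sub, h1, div_self (Complex.exp_ne_zero _)]
  rw [← mul_sub] at this
  have h2 : Complex.exp ((Real.pi : ℂ) * Complex.I) = 1 := by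
    rw [← this]; congr 1
    have hc2 : ((⟪w₁, v⟫:ℝ):ℂ) - ((⟪w₂, v⟫:ℝ):ℂ) = (Real.pi:ℂ) := by
      rw [← Complex.ofReal_sub, hinner]
    rw [hc2]
    ring
  rw [Complex.exp_pi_mul_I] at h2
  norm_num at h2

/-- The finite sum of characters with nonzero real coefficients is somewhere nonzero. -/
lemma exists_char_sum_ne_zero (x : Fin N → V d) (hx : Function.Injective x)
    (c : Fin N → ℝ) (hc : c ≠ 0) :
    ∃ v : V d, (∑ i, (c i : ℂ) * Complex.exp (Complex.I * (⟪x i, v⟫ : ℝ))) ≠ 0 := by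
  by_contra hS
  push_neg at hS
  have hli : LinearIndependent ℂ (fun i : Fin N => ⇑(charMH (x i))) := by
    have h0 := linearIndependent_monoidHom (Multiplicative (V d)) ℂ
    exact h0.comp (fun i => charMH (x i)) (charMH_injective.comp hx)
  have := Fintype.linearIndependent_iff.mp hli (fun i => (c i : ℂ)) ?_
  · apply hc
    funext i
    exact_mod_cast this i
  · funext v
    have := hS (Multiplicative.toAdd v)
    simpa [charMH, Finset.sum_apply] using this

lemma gaussian_quadform_pos (x : Fin N → V d) (hx : Function.Injective x)
    (c : Fin N → ℝ) (hc : c ≠ 0) {t : ℝ} (ht : 0 < t) :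
    0 < ∑ i, ∑ j, c i * c j * Real.exp (-(t * ‖x i - x j‖ ^ 2)) := by
  classical
  have ht4 : (0:ℝ) < 1/(4*t) := by positivity
  set b : ℂ := ((1/(4*t) : ℝ) : ℂ) with hbdef
  have hb : 0 < b.re := by simpa [hbdef] using ht4
  set S : V d → ℂ := fun v => ∑ i, (c i : ℂ) * Complex.exp (Complex.I * (⟪x i, v⟫ : ℝ)) with hS
  set f : V d → ℝ := fun v => Real.exp (-(1/(4*t)) * ‖v‖^2) * Complex.normSq (S v) with hf
  set F : V d → ℂ := fun v => Complex.exp (-b * ‖v‖^2) * (S v * (starRingEnd ℂ) (S v)) with hF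
  set Kr : ℝ := (4*Real.pi*t) ^ ((d:ℝ)/2) with hKr
  have hKrpos : 0 < Kr := Real.rpow_pos_of_pos (by positivity) _
  set g : Fin N × Fin N → V d → ℂ :=
    fun p v => ((c p.1 * c p.2 : ℝ) : ℂ) *
      Complex.exp (-b * ‖v‖^2 + Complex.I * ((⟪x p.1 - x p.2, v⟫ : ℝ) : ℂ)) with hg
  -- pointwise: the double sum of Gaussians times characters equals F
  have hpoint : ∀ v, ∑ p : Fin N × Fin N, g p v = F v := by
    intro v
    rw [hF, hS]
    simp only [map_sum, map_mul, Complex.conj_ofReal, ← Complex.exp_conj, Complex.conj_I]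
    rw [Finset.sum_mul_sum, Finset.mul_sum, hg, Fintype.sum_prod_type]
    apply Finset.sum_congr rfl
    intro i _
    rw [Finset.mul_sum]
    apply Finset.sum_congr rfl
    intro j _
    beta_reduce
    rw [inner_sub_left]
    push_cast
    rw [show -b*(‖v‖^2:ℂ) + Complex.I * (((⟪x i, v⟫:ℝ):ℂ) - ((⟪x j, v⟫:ℝ):ℂ))
        = (-b*(‖v‖^2:ℂ)) + (Complex.I * ((⟪x i, v⟫:ℝ):ℂ) + (-Complex.I * ((⟪x j, v⟫:ℝ):ℂ))) from by ring]
    rw [Complex.exp_add, Complex.exp_add]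
    ring
  -- each summand is integrable
  have hgint : ∀ p : Fin N × Fin N, Integrable (g p) := by
    intro p
    exact (GaussianFourier.integrable_cexp_neg_mul_sq_norm_add hb Complex.I (x p.1 - x p.2)).const_mul _
  have hFint : Integrable F := by
    refine (integrable_finset_sum Finset.univ (fun p _ => hgint p)).congr ?_
    exact Filter.Eventually.of_forall hpoint
  have hfeq : ∀ v, ((f v : ℝ) : ℂ) = F v := by
    intro v
    show ((Real.exp (-(1/(4*t)) * ‖v‖^2) * Complex.normSq (S v) : ℝ) : ℂ)
        = Complex.exp (-b * ‖v‖^2) * (S v * (starRingEnd ℂ) (S v))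
    rw [Complex.mul_conj, hbdef]
    push_cast
    ring_nf
  have hfint : Integrable f := by
    have : f = fun v => (F v).re := by
      funext v; rw [← hfeq v, Complex.ofReal_re]
    rw [this]; exact hFint.re
  -- the Fourier integral of each summand
  have key : ∀ p : Fin N × Fin N, ∫ v : V d, g p v =
      ((c p.1 * c p.2 : ℝ) : ℂ) * (↑Kr * Complex.exp (-(t:ℂ) * ((‖x p.1 - x p.2‖^2 : ℝ) : ℂ))) := by
    intro p
    rw [hg]
    simp only []
    rw [MeasureTheory.integral_const_mul]
    congr 1
    rw [GaussianFourier.integral_cexp_neg_mul_sq_norm_add hb Complex.I (x p.1 - x p.2)]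
    have hfr : (Module.finrank ℝ (V d)) = d := finrank_euclideanSpace_fin
    rw [hfr]
    congr 1
    · -- (π/b)^(d/2) = ↑Kr
      have h1 : ((Real.pi : ℂ))/b = ((4*Real.pi*t : ℝ) : ℂ) := by
        rw [hbdef]; push_cast; field_simp
      rw [h1, hKr]
      rw [show ((d:ℂ)/2) = (((d:ℝ)/2 : ℝ) : ℂ) from by push_cast; ring]
      rw [← Complex.ofReal_cpow (by positivity)]
    · -- exponent
      rw [hbdef, Complex.I_sq]
      have htne : (t:ℂ) ≠ 0 := by
        simp only [ne_eq, Complex.ofReal_eq_zero]; exact ht.ne'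
      push_cast
      field_simp
  -- assemble
  have hsum : Kr * (∑ i, ∑ j, c i * c j * Real.exp (-(t * ‖x i - x j‖ ^ 2))) = ∫ v, f v := by
    have hcx : ((Kr * (∑ i, ∑ j, c i * c j * Real.exp (-(t * ‖x i - x j‖ ^ 2))) : ℝ) : ℂ)
        = ((∫ v, f v : ℝ) : ℂ) := by
      rw [show ((∫ v, f v : ℝ) : ℂ) = ∫ v, ((f v : ℝ) : ℂ) from (integral_ofReal (𝕜 := ℂ)).symm]
      have e1 : (∫ (v : V d), ((f v : ℝ) : ℂ)) = ∫ v, F v := by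
        congr 1; funext v; exact hfeq v
      rw [e1]
      have e2 : (∫ v, F v) = ∑ p : Fin N × Fin N, ∫ v, g p v := by
        rw [← MeasureTheory.integral_finset_sum Finset.univ (fun p _ => hgint p)]
        congr 1; funext v; exact (hpoint v).symm
      rw [e2]
      have e3 : ∀ p : Fin N × Fin N, (∫ v, g p v) =
          ((c p.1 * c p.2 * (Kr * Real.exp (-(t * ‖x p.1 - x p.2‖^2))) : ℝ) : ℂ) := by
        intro p
        rw [key p]
        push_cast
        rw [neg_mul]
      rw [Finset.sum_congr rfl (fun p _ => e3 p)]
      push_cast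
      rw [Fintype.sum_prod_type]
      rw [Finset.mul_sum]
      apply Finset.sum_congr rfl
      intro i _
      rw [Finset.mul_sum]
      apply Finset.sum_congr rfl
      intro j _
      ring
    exact_mod_cast hcx
  -- positivity of ∫ f
  obtain ⟨v₀, hv₀⟩ := exists_char_sum_ne_zero x hx c hc
  have hScont : Continuous S := by
    apply continuous_finset_sum
    intro i _
    exact continuous_const.mul (Complex.continuous_exp.comp
      (continuous_const.mul (Complex.continuous_ofReal.comp
        (Continuous.inner continuous_const continuous_id))))
  have hfnn : ∀ v, 0 ≤ f v :=
    fun v => mul_nonneg (Real.exp_pos _).le (Complex.normSq_nonneg _)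
  have hU : IsOpen {v : V d | S v ≠ 0} := isOpen_compl_singleton.preimage hScont
  have hUsub : {v : V d | S v ≠ 0} ⊆ Function.support f := by
    intro v hv
    have : 0 < f v := mul_pos (Real.exp_pos _) (Complex.normSq_pos.mpr hv)
    exact this.ne'
  have hIpos : 0 < ∫ v, f v := by
    rw [integral_pos_iff_support_of_nonneg hfnn hfint]
    refine lt_of_lt_of_le ?_ (measure_mono hUsub)
    exact hU.measure_pos volume ⟨v₀, hv₀⟩
  nlinarith [hsum, hIpos, hKrpos]




/-- The basic integrand after substitution `t = u²`. -/
def gI (a r : ℝ) (n : ℕ) (u : ℝ) : ℝ := (u^n)⁻¹ * rexp (-(a/(2*u))^2 - (r*u)^2)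

def J (a r : ℝ) (n : ℕ) : ℝ := ∫ u in Set.Ioi (0:ℝ), gI a r n u

lemma gI_nonneg {a r : ℝ} {n : ℕ} {u : ℝ} (hu : 0 < u) : 0 ≤ gI a r n u := by
  unfold gI; positivity

/-- Key sub-Gaussian bound near the origin. -/
lemma exp_bound {a u : ℝ} (ha : 0 < a) (hu : 0 < u) :
    rexp (-(a/(2*u))^2) ≤ 65536 / a^8 * u^8 := by
  set y : ℝ := (a/(2*u))^2 with hy
  have hypos : 0 < y := by positivity
  have h4 : y^4 ≤ 256 * rexp y := by
    have h1 : y/4 ≤ rexp (y/4) := le_trans (by linarith) (Real.add_one_le_exp (y/4))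
    have h2 : (y/4)^4 ≤ (rexp (y/4))^4 :=
      pow_le_pow_left₀ (by positivity) h1 4
    have h3 : (rexp (y/4))^4 = rexp y := by
      rw [← Real.exp_nat_mul]; norm_num; ring
    calc y^4 = 256 * (y/4)^4 := by ring
    _ ≤ 256 * (rexp (y/4))^4 := by linarith
    _ = 256 * rexp y := by rw [h3]
  have h5 : rexp (-y) ≤ 256 / y^4 := by
    rw [Real.exp_neg, inv_le_comm₀ (Real.exp_pos y) (by positivity)]
    have hinv : (256 / y^4)⁻¹ = y^4/256 := by field_simp
    rw [hinv, div_le_iff₀ (by norm_num : (0:ℝ) < 256)]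
    linarith
  refine h5.trans (le_of_eq ?_)
  rw [hy]
  field_simp
  ring

lemma gI_le_one_aux {a r : ℝ} {n : ℕ} (ha : 0 < a) (hn : n ≤ 8) {u : ℝ}
    (hu : 0 < u) (hu1 : u ≤ 1) :
    gI a r n u ≤ 65536 / a^8 * rexp (-(r*u)^2) := by
  unfold gI
  rw [show -(a/(2*u))^2 - (r*u)^2 = (-(a/(2*u))^2) + (-(r*u)^2) from by ring, Real.exp_add]
  rw [show (u^n)⁻¹ * (rexp (-(a/(2*u))^2) * rexp (-(r*u)^2))
      = ((u^n)⁻¹ * rexp (-(a/(2*u))^2)) * rexp (-(r*u)^2) from by ring]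
  apply mul_le_mul_of_nonneg_right _ (Real.exp_pos _).le
  have h1 : (u^n)⁻¹ * rexp (-(a/(2*u))^2) ≤ (u^n)⁻¹ * (65536/a^8 * u^8) :=
    mul_le_mul_of_nonneg_left (exp_bound ha hu) (by positivity)
  refine h1.trans ?_
  have h2 : (u^n)⁻¹ * (65536/a^8 * u^8) = 65536/a^8 * u^(8-n) := by
    have he : u^(8:ℕ) = u^n * u^(8-n) := by rw [← pow_add]; congr 1; omega
    rw [he]
    have hun : (u:ℝ)^n ≠ 0 := by positivity
    field_simp
  rw [h2]
  have h3 : u^(8-n) ≤ 1 := pow_le_one₀ hu.le hu1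
  calc 65536/a^8 * u^(8-n) ≤ 65536/a^8 * 1 :=
        mul_le_mul_of_nonneg_left h3 (by positivity)
  _ = 65536/a^8 := by ring

lemma gI_measurable (a r : ℝ) (n : ℕ) : Measurable (gI a r n) := by
  unfold gI
  fun_prop

/-- Integrability on `(0,∞)`, first version: `r > 0`. -/
lemma integrableOn_gI_pos {a r : ℝ} (ha : 0 < a) (hr : 0 < r) {n : ℕ} (hn : n ≤ 8) :
    IntegrableOn (gI a r n) (Set.Ioi 0) := by
  have hint : IntegrableOn (fun u => (65536/a^8 + 1) * rexp (-(r^2) * u^2)) (Set.Ioi 0) :=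
    ((integrable_exp_neg_mul_sq (by positivity : (0:ℝ) < r^2)).const_mul _).integrableOn
  refine Integrable.mono' hint ((gI_measurable a r n).aestronglyMeasurable) ?_
  rw [ae_restrict_iff' measurableSet_Ioi]
  refine Filter.Eventually.of_forall (fun u hu => ?_)
  have hu : 0 < u := hu
  rw [Real.norm_of_nonneg (gI_nonneg hu)]
  have hre : rexp (-(r*u)^2) = rexp (-(r^2) * u^2) := by ring_nf
  rcases le_or_gt u 1 with h1 | h1
  · calc gI a r n u ≤ 65536 / a^8 * rexp (-(r*u)^2) := gI_le_one_aux ha hn hu h1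
    _ ≤ (65536/a^8 + 1) * rexp (-(r^2) * u^2) := by
        rw [hre]
        apply mul_le_mul_of_nonneg_right _ (Real.exp_pos _).le
        linarith [show (0:ℝ) < 65536/a^8 from by positivity]
  · have h2 : (u^n)⁻¹ ≤ 1 := by
      apply inv_le_one_of_one_le₀
      exact one_le_pow₀ h1.le
    have h3 : rexp (-(a/(2*u))^2 - (r*u)^2) ≤ rexp (-(r^2)*u^2) := by
      apply Real.exp_le_exp.mpr
      nlinarith [sq_nonneg (a/(2*u))]
    calc gI a r n u ≤ 1 * rexp (-(r^2)*u^2) := by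
          unfold gI
          exact mul_le_mul h2 h3 (Real.exp_pos _).le zero_le_one
    _ ≤ (65536/a^8 + 1) * rexp (-(r^2) * u^2) := by
        apply mul_le_mul_of_nonneg_right _ (Real.exp_pos _).le
        linarith [show (0:ℝ) < 65536/a^8 from by positivity]

/-- Integrability on `(0,∞)`, second version: `2 ≤ n`, any `r`. -/
lemma integrableOn_gI_two {a r : ℝ} (ha : 0 < a) {n : ℕ} (h2 : 2 ≤ n) (hn : n ≤ 8) :
    IntegrableOn (gI a r n) (Set.Ioi 0) := by
  set C : ℝ := 65536/a^8 with hC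
  have hCpos : 0 < C := by positivity
  have hint : IntegrableOn (fun u => (2*C+2) * (1+u^2)⁻¹) (Set.Ioi 0) :=
    (integrable_inv_one_add_sq.const_mul _).integrableOn
  refine Integrable.mono' hint ((gI_measurable a r n).aestronglyMeasurable) ?_
  rw [ae_restrict_iff' measurableSet_Ioi]
  refine Filter.Eventually.of_forall (fun u hu => ?_)
  have hu : 0 < u := hu
  rw [Real.norm_of_nonneg (gI_nonneg hu)]
  have hden : (0:ℝ) < 1 + u^2 := by positivity
  rcases le_or_gt u 1 with h1 | h1
  · have hb : gI a r n u ≤ C := by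
      refine (gI_le_one_aux ha hn hu h1).trans ?_
      rw [hC]
      calc 65536/a^8 * rexp (-(r*u)^2) ≤ 65536/a^8 * 1 := by
            apply mul_le_mul_of_nonneg_left _ (by positivity)
            exact Real.exp_le_one_iff.mpr (by nlinarith [sq_nonneg (r*u)])
      _ = 65536/a^8 := by ring
    have h12 : (1:ℝ)+u^2 ≤ 2 := by nlinarith
    have hinv : (2:ℝ)⁻¹ ≤ (1+u^2)⁻¹ := by
      apply inv_anti₀ hden h12
    have hfin : C ≤ (2*C+2) * (1+u^2)⁻¹ := by
      nlinarith [mul_le_mul_of_nonneg_left hinv (by positivity : (0:ℝ) ≤ 2*C+2)]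
    exact hb.trans hfin
  · have hb : gI a r n u ≤ (u^2)⁻¹ := by
      unfold gI
      calc (u^n)⁻¹ * rexp (-(a/(2*u))^2 - (r*u)^2) ≤ (u^n)⁻¹ * 1 := by
            apply mul_le_mul_of_nonneg_left _ (by positivity)
            exact Real.exp_le_one_iff.mpr (by nlinarith [sq_nonneg (a/(2*u)), sq_nonneg (r*u)])
      _ = (u^n)⁻¹ := by ring
      _ ≤ (u^2)⁻¹ := by
            apply inv_anti₀ (by positivity)
            exact pow_le_pow_right₀ h1.le h2
    have h2u : (1:ℝ) + u^2 ≤ 2 * u^2 := by nlinarith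
    have hinv : (2*u^2)⁻¹ ≤ (1+u^2)⁻¹ := by
      apply inv_anti₀ hden h2u
    have hu2 : (0:ℝ) < (u^2)⁻¹ := by positivity
    have h5 : (u^2)⁻¹ ≤ (2*C+2) * (2*u^2)⁻¹ := by
      rw [mul_inv]
      nlinarith [hu2, hCpos]
    have hfin : (u^2)⁻¹ ≤ (2*C+2) * (1+u^2)⁻¹ :=
      h5.trans (mul_le_mul_of_nonneg_left hinv (by positivity))
    exact hb.trans hfin

/-- Substitution `v = k/u` maps `(0,∞)` to itself. -/
lemma integral_inv_subst {k : ℝ} (hk : 0 < k) (g : ℝ → ℝ) :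
    ∫ v in Set.Ioi (0:ℝ), g v = ∫ u in Set.Ioi (0:ℝ), (k/u^2) * g (k/u) := by
  have himg : (fun u => k/u) '' (Set.Ioi 0) = Set.Ioi 0 := by
    apply Set.Subset.antisymm
    · rintro _ ⟨u, hu, rfl⟩
      exact div_pos hk hu
    · intro v hv
      exact ⟨k/v, div_pos hk hv, by field_simp⟩
  have hderiv : ∀ u ∈ Set.Ioi (0:ℝ), HasDerivWithinAt (fun u => k/u) (-(k/u^2)) (Set.Ioi 0) u := by
    intro u hu
    have h : HasDerivAt (fun y : ℝ => k * y⁻¹) (-(k * (u^2)⁻¹)) u := by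
      simpa using (hasDerivAt_inv (ne_of_gt hu)).const_mul k
    have h2 : HasDerivAt (fun y : ℝ => k/y) (-(k/u^2)) u := by
      simpa [div_eq_mul_inv] using h
    exact h2.hasDerivWithinAt
  have hinj : Set.InjOn (fun u => k/u) (Set.Ioi 0) := by
    intro u hu v hv h
    simp only at h
    rw [div_eq_div_iff (ne_of_gt hu) (ne_of_gt hv)] at h
    exact mul_left_cancel₀ (ne_of_gt hk) h.symm
  conv_lhs => rw [← himg]
  rw [integral_image_eq_integral_abs_deriv_smul measurableSet_Ioi hderiv hinj]
  apply setIntegral_congr_fun measurableSet_Ioi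
  intro u hu
  have hu : 0 < u := hu
  simp only [smul_eq_mul]
  rw [abs_neg, abs_of_pos (div_pos hk (pow_pos hu 2))]

/-- Substitution `s = r u - a/(2u)` maps `(0,∞)` onto `ℝ`. -/
lemma integral_phi_subst {a r : ℝ} (ha : 0 < a) (hr : 0 < r) (g : ℝ → ℝ) :
    ∫ s, g s = ∫ u in Set.Ioi (0:ℝ), (r + a/(2*u^2)) * g (r*u - a/(2*u)) := by
  set φ : ℝ → ℝ := fun u => r*u - a/(2*u) with hφ
  have himg : φ '' (Set.Ioi 0) = Set.univ := by
    apply Set.eq_univ_of_forall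
    intro y
    set u : ℝ := (y + Real.sqrt (y^2 + 2*a*r))/(2*r) with hu
    have hs : Real.sqrt (y^2 + 2*a*r) > |y| := by
      have : |y| = Real.sqrt (y^2) := (Real.sqrt_sq_eq_abs y).symm
      rw [this]
      apply Real.sqrt_lt_sqrt (sq_nonneg y)
      nlinarith
    have hupos : 0 < u := by
      rw [hu]
      apply div_pos _ (by linarith)
      have := neg_abs_le y
      linarith
    have hsq : (Real.sqrt (y^2 + 2*a*r))^2 = y^2 + 2*a*r :=
      Real.sq_sqrt (by nlinarith [sq_nonneg y])
    have hquad : 2*r*u^2 - 2*y*u - a = 0 := by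
      have h2 : (2*r*u - y)^2 = (Real.sqrt (y^2 + 2*a*r))^2 := by
        rw [hsq, hu]
        field_simp
        try ring
        rw [Real.sq_sqrt (by nlinarith [sq_nonneg y, mul_pos ha hr])]
      rw [hsq] at h2
      nlinarith [h2]
    refine ⟨u, hupos, ?_⟩
    show r*u - a/(2*u) = y
    field_simp
    nlinarith [hquad]
  have hderiv : ∀ u ∈ Set.Ioi (0:ℝ), HasDerivWithinAt φ (r + a/(2*u^2)) (Set.Ioi 0) u := by
    intro u hu
    have hu : 0 < u := hu
    have h1 : HasDerivAt (fun y : ℝ => a/(2*y)) (-(a/(2*u^2))) u := by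
      have h : HasDerivAt (fun y : ℝ => (a/2) * y⁻¹) (-((a/2) * (u^2)⁻¹)) u := by
        simpa using (hasDerivAt_inv (ne_of_gt hu)).const_mul (a/2)
      have heq : (fun y : ℝ => a/(2*y)) = fun y : ℝ => (a/2) * y⁻¹ := by
        funext y; rw [div_eq_mul_inv, mul_inv]; ring
      rw [heq, show -(a/(2*u^2)) = -((a/2) * (u^2)⁻¹) from by ring]
      exact h
    have h2 : HasDerivAt (fun u : ℝ => r*u) r u := by
      simpa using (hasDerivAt_id u).const_mul r
    have := h2.sub h1
    exact (this.congr_deriv (by ring)).hasDerivWithinAt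
  have hinj : Set.InjOn φ (Set.Ioi 0) := by
    have hmono : StrictMonoOn φ (Set.Ioi 0) := by
      intro u hu v hv huv
      have hu : 0 < u := hu
      have hv : 0 < v := hv
      show r*u - a/(2*u) < r*v - a/(2*v)
      have h1 : r*u < r*v := by nlinarith
      have h2 : a/(2*v) < a/(2*u) := by
        apply div_lt_div_of_pos_left ha (by linarith) (by linarith)
      linarith
    exact hmono.injOn
  have : ∫ s, g s = ∫ s in φ '' (Set.Ioi 0), g s := by
    rw [himg, setIntegral_univ]
  rw [this, integral_image_eq_integral_abs_deriv_smul measurableSet_Ioi hderiv hinj]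
  apply setIntegral_congr_fun measurableSet_Ioi
  intro u hu
  have hu : 0 < u := hu
  simp only [smul_eq_mul]
  rw [abs_of_pos (show (0:ℝ) < r + a/(2*u^2) from by positivity)]

/-- FTC on `(0,∞)` with vanishing boundary values. -/
lemma integral_Ioi_deriv_zero (F F' : ℝ → ℝ)
    (hd : ∀ u ∈ Set.Ioi (0:ℝ), HasDerivAt F (F' u) u)
    (hint : IntegrableOn F' (Set.Ioi 0))
    (h0 : Tendsto F (nhdsWithin 0 (Set.Ioi 0)) (nhds 0))
    (htop : Tendsto F atTop (nhds 0)) :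
    ∫ u in Set.Ioi (0:ℝ), F' u = 0 := by
  have hseq : ∀ n : ℕ, (∫ u in Set.Ioi (((n:ℝ)+1)⁻¹), F' u) = 0 - F (((n:ℝ)+1)⁻¹) := by
    intro n
    have hpos : (0:ℝ) < ((n:ℝ)+1)⁻¹ := by positivity
    apply integral_Ioi_of_hasDerivAt_of_tendsto
    · exact ((hd _ hpos).continuousAt.continuousWithinAt)
    · intro x hx
      exact hd x (lt_trans hpos hx)
    · exact hint.mono_set (fun x hx => lt_trans hpos hx)
    · exact htop
  have hunion : (Set.Ioi (0:ℝ)) = ⋃ n : ℕ, Set.Ioi (((n:ℝ)+1)⁻¹) := by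
    ext y
    simp only [Set.mem_Ioi, Set.mem_iUnion]
    constructor
    · intro hy
      obtain ⟨n, hn⟩ := exists_nat_one_div_lt hy
      exact ⟨n, by rwa [one_div] at hn⟩
    · rintro ⟨n, hn⟩
      exact lt_trans (by positivity) hn
  have h1 : Tendsto (fun n : ℕ => ∫ u in Set.Ioi (((n:ℝ)+1)⁻¹), F' u) atTop
      (nhds (∫ u in Set.Ioi (0:ℝ), F' u)) := by
    have hmono : Monotone (fun n : ℕ => Set.Ioi (((n:ℝ)+1)⁻¹)) := by
      intro m n hmn
      apply Set.Ioi_subset_Ioi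
      apply inv_anti₀ (by positivity)
      have : (m:ℝ) ≤ n := Nat.cast_le.mpr hmn
      linarith
    have := tendsto_setIntegral_of_monotone (fun n : ℕ => measurableSet_Ioi) hmono
      (by rw [← hunion]; exact hint)
    rwa [← hunion] at this
  have h2 : Tendsto (fun n : ℕ => 0 - F (((n:ℝ)+1)⁻¹)) atTop (nhds (0 - 0)) := by
    apply Tendsto.const_sub
    apply h0.comp
    refine tendsto_nhdsWithin_of_tendsto_nhds_of_eventually_within _ ?_ ?_
    · have := tendsto_one_div_add_atTop_nhds_zero_nat (𝕜 := ℝ)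
      simpa [one_div] using this
    · exact Filter.Eventually.of_forall (fun n => Set.mem_Ioi.mpr (by positivity))
  have h3 : Tendsto (fun n : ℕ => ∫ u in Set.Ioi (((n:ℝ)+1)⁻¹), F' u) atTop (nhds (0-0)) := by
    refine h2.congr ?_
    intro n
    exact (hseq n).symm
  have := tendsto_nhds_unique h1 h3
  simpa using this

lemma gI_pow_cancel {a : ℝ} {n : ℕ} (hn : n ≤ 8) {u : ℝ} (hu : 0 < u) :
    (u^n)⁻¹ * (65536/a^8 * u^8) = 65536/a^8 * u^(8-n) := by
  have he : u^(8:ℕ) = u^n * u^(8-n) := by rw [← pow_add]; congr 1; omega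
  have hun : (u:ℝ)^n ≠ 0 := by positivity
  rw [he, show (u^n)⁻¹ * (65536/a^8 * (u^n * u^(8-n)))
      = ((u^n)⁻¹ * u^n) * (65536/a^8 * u^(8-n)) from by ring,
    inv_mul_cancel₀ hun, one_mul]

lemma tendsto_gI_zero {a r : ℝ} (ha : 0 < a) {m : ℕ} (hm8 : m ≤ 7) :
    Tendsto (gI a r m) (nhdsWithin 0 (Set.Ioi 0)) (nhds 0) := by
  apply squeeze_zero' (eventually_nhdsWithin_of_forall (fun u hu => gI_nonneg hu))
  · apply eventually_nhdsWithin_of_forall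
    intro u hu
    have hu : (0:ℝ) < u := hu
    have h1 : rexp (-(a/(2*u))^2 - (r*u)^2) ≤ rexp (-(a/(2*u))^2) := by
      apply Real.exp_le_exp.mpr
      nlinarith [sq_nonneg (r*u)]
    calc gI a r m u ≤ (u^m)⁻¹ * (65536/a^8 * u^8) := by
          unfold gI
          exact mul_le_mul_of_nonneg_left (h1.trans (exp_bound ha hu)) (by positivity)
    _ = 65536/a^8 * u^(8-m) := gI_pow_cancel (by omega) hu
  · have h : Tendsto (fun u : ℝ => 65536/a^8 * u^(8-m)) (nhds 0)
        (nhds (65536/a^8 * (0:ℝ)^(8-m))) := by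
      apply Continuous.tendsto
      exact continuous_const.mul (continuous_pow (8-m))
    rw [zero_pow (by omega : 8-m ≠ 0), mul_zero] at h
    exact h.mono_left nhdsWithin_le_nhds

lemma tendsto_gI_top {a r : ℝ} {m : ℕ} (hm : 1 ≤ m) :
    Tendsto (gI a r m) atTop (nhds 0) := by
  apply squeeze_zero'
  · filter_upwards [eventually_gt_atTop 0] with u hu using gI_nonneg hu
  · filter_upwards [eventually_ge_atTop 1] with u hu
    have hu0 : (0:ℝ) < u := lt_of_lt_of_le one_pos hu
    have h1 : rexp (-(a/(2*u))^2 - (r*u)^2) ≤ 1 :=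
      Real.exp_le_one_iff.mpr (by nlinarith [sq_nonneg (a/(2*u)), sq_nonneg (r*u)])
    have h2 : (u^m)⁻¹ ≤ u⁻¹ := by
      apply inv_anti₀ hu0
      exact le_self_pow₀ hu (by omega)
    calc gI a r m u ≤ (u^m)⁻¹ * 1 := by
          unfold gI
          exact mul_le_mul_of_nonneg_left h1 (by positivity)
    _ = (u^m)⁻¹ := by ring
    _ ≤ u⁻¹ := h2
  · exact tendsto_inv_atTop_zero

lemma hasDerivAt_half_div {a : ℝ} {u : ℝ} (hu : u ≠ 0) :
    HasDerivAt (fun y : ℝ => a/(2*y)) (-(a/(2*u^2))) u := by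
  have h : HasDerivAt (fun y : ℝ => (a/2) * y⁻¹) (-((a/2) * (u^2)⁻¹)) u := by
    simpa using (hasDerivAt_inv hu).const_mul (a/2)
  have heq : (fun y : ℝ => a/(2*y)) = fun y : ℝ => (a/2) * y⁻¹ := by
    funext y; rw [div_eq_mul_inv, mul_inv]; ring
  rw [heq, show -(a/(2*u^2)) = -((a/2) * (u^2)⁻¹) from by ring]
  exact h

lemma hasDerivAt_gI {a r : ℝ} (k : ℕ) {u : ℝ} (hu : 0 < u) :
    HasDerivAt (gI a r (k+1))
      ((-((k:ℝ)+1)) * gI a r (k+2) u + (a^2/2) * gI a r (k+4) u + (-(2*r^2)) * gI a r k u) u := by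
  have hu0 : u ≠ 0 := ne_of_gt hu
  have hp : HasDerivAt (fun y : ℝ => (y^(k+1))⁻¹)
      (-((((k:ℝ))+1) * u^k) / (u^(k+1))^2) u := by
    have h0 := (hasDerivAt_pow (k+1) u).inv (pow_ne_zero _ hu0)
    exact h0.congr_deriv (by push_cast; simp)
  have hsq : HasDerivAt (fun y : ℝ => -(a/(2*y))^2 - (r*y)^2)
      (a^2/2 * (u^3)⁻¹ - 2*r^2*u) u := by
    have h1 := ((hasDerivAt_half_div (a := a) hu0).pow 2).neg
    have h2 := ((hasDerivAt_id u).const_mul r).pow 2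
    have h3 := h1.sub h2
    refine h3.congr_deriv ?_
    have h2u : (2*u) ≠ 0 := by positivity
    simp only [id_eq]
    field_simp
    norm_num
    field_simp
    ring
  have hmul := hp.mul hsq.exp
  have hfun : ((fun y : ℝ => (y^(k+1))⁻¹) * fun y : ℝ => rexp (-(a/(2*y))^2 - (r*y)^2)) = gI a r (k+1) := by
    funext y; rfl
  rw [hfun] at hmul
  refine hmul.congr_deriv ?_
  unfold gI
  have hE : (0:ℝ) < rexp (-(a/(2*u))^2 - (r*u)^2) := Real.exp_pos _
  field_simp
  ring

lemma integrableOn_const_mul_gI {a r : ℝ} (ha : 0 < a) (hr : 0 ≤ r) (c : ℝ) {n : ℕ}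
    (hn : n ≤ 8) (h2 : 2 ≤ n ∨ 0 < r ∨ c = 0) :
    IntegrableOn (fun u => c * gI a r n u) (Set.Ioi 0) := by
  rcases h2 with h | h | h
  · exact (integrableOn_gI_two ha h hn).const_mul c
  · exact (integrableOn_gI_pos ha h hn).const_mul c
  · simp only [h, zero_mul]
    exact integrableOn_zero

lemma J_recursion {a r : ℝ} (ha : 0 < a) (hr : 0 ≤ r) (k : ℕ) (hk : k ≤ 4) :
    (a^2/2) * J a r (k+4) = ((k:ℝ)+1) * J a r (k+2) + 2*r^2 * J a r k := by
  have hCzero : 0 < r ∨ (-(2*r^2)) = 0 := by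
    rcases eq_or_lt_of_le hr with h | h
    · right; rw [← h]; ring
    · left; exact h
  have hAint := integrableOn_const_mul_gI ha hr (-((k:ℝ)+1)) (n := k+2) (by omega) (Or.inl (by omega))
  have hBint := integrableOn_const_mul_gI ha hr (a^2/2) (n := k+4) (by omega) (Or.inl (by omega))
  have hCint : IntegrableOn (fun u => (-(2*r^2)) * gI a r k u) (Set.Ioi 0) := by
    rcases hCzero with h | h
    · exact integrableOn_const_mul_gI ha hr _ (by omega) (Or.inr (Or.inl h))
    · exact integrableOn_const_mul_gI ha hr _ (by omega) (Or.inr (Or.inr h))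
  have hint : IntegrableOn (fun u => (-((k:ℝ)+1)) * gI a r (k+2) u + (a^2/2) * gI a r (k+4) u
      + (-(2*r^2)) * gI a r k u) (Set.Ioi 0) := (hAint.add hBint).add hCint
  have hABint : IntegrableOn (fun u => (-((k:ℝ)+1)) * gI a r (k+2) u
      + (a^2/2) * gI a r (k+4) u) (Set.Ioi 0) := hAint.add hBint
  have h0 := integral_Ioi_deriv_zero (gI a r (k+1)) _
    (fun u hu => hasDerivAt_gI k hu) hint (tendsto_gI_zero ha (by omega)) (tendsto_gI_top (by omega))
  rw [integral_add hABint hCint, integral_add hAint hBint,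
    integral_const_mul, integral_const_mul, integral_const_mul] at h0
  have e1 : (∫ u in Set.Ioi (0:ℝ), gI a r (k+2) u) = J a r (k+2) := rfl
  have e2 : (∫ u in Set.Ioi (0:ℝ), gI a r (k+4) u) = J a r (k+4) := rfl
  have e3 : (∫ u in Set.Ioi (0:ℝ), gI a r k u) = J a r k := rfl
  rw [e1, e2, e3] at h0
  linarith

lemma gauss_total : (∫ s : ℝ, rexp (-s^2)) = Real.sqrt π := by
  have h := integral_gaussian 1
  simpa using h

lemma gauss_Ioi : (∫ s in Set.Ioi (0:ℝ), rexp (-s^2)) = Real.sqrt π / 2 := by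
  have h := integral_gaussian_Ioi 1
  simpa using h

/-- Pointwise splitting of the exponent. -/
lemma exp_split {a r u : ℝ} (hu : u ≠ 0) :
    rexp (-(a/(2*u))^2 - (r*u)^2) = rexp (-(a*r)) * rexp (-(r*u - a/(2*u))^2) := by
  rw [← Real.exp_add]
  congr 1
  field_simp
  ring

lemma XY_relation {a r : ℝ} (ha : 0 < a) (hr : 0 < r) :
    (∫ u in Set.Ioi (0:ℝ), rexp (-(r*u - a/(2*u))^2))
      = (a/(2*r)) * ∫ u in Set.Ioi (0:ℝ), (u^2)⁻¹ * rexp (-(r*u - a/(2*u))^2) := by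
  have hk : (0:ℝ) < a/(2*r) := by positivity
  rw [integral_inv_subst hk (fun v => rexp (-(r*v - a/(2*v))^2)), ← integral_const_mul]
  apply setIntegral_congr_fun measurableSet_Ioi
  intro u hu
  have hu : 0 < u := hu
  have harg : r*((a/(2*r))/u) - a/(2*((a/(2*r))/u)) = -(r*u - a/(2*u)) := by
    field_simp
    ring
  show (a/(2*r))/u^2 * rexp (-(r*((a/(2*r))/u) - a/(2*((a/(2*r))/u)))^2)
      = a/(2*r) * ((u^2)⁻¹ * rexp (-(r*u - a/(2*u))^2))
  rw [harg, neg_sq]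
  field_simp

lemma Y_val {a r : ℝ} (ha : 0 < a) (hr : 0 < r) :
    (∫ u in Set.Ioi (0:ℝ), (u^2)⁻¹ * rexp (-(r*u - a/(2*u))^2)) = Real.sqrt π / a := by
  set Y : ℝ := ∫ u in Set.Ioi (0:ℝ), (u^2)⁻¹ * rexp (-(r*u - a/(2*u))^2) with hY
  set X : ℝ := ∫ u in Set.Ioi (0:ℝ), rexp (-(r*u - a/(2*u))^2) with hX
  -- integrability of the two pieces
  have hXint : IntegrableOn (fun u => rexp (-(r*u - a/(2*u))^2)) (Set.Ioi 0) := by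
    refine IntegrableOn.congr_fun
      (integrableOn_const_mul_gI ha hr.le (rexp (a*r)) (n := 0) (by omega) (Or.inr (Or.inl hr))) ?_
      measurableSet_Ioi
    intro u hu
    have hu : 0 < u := hu
    show rexp (a*r) * gI a r 0 u = rexp (-(r*u - a/(2*u))^2)
    unfold gI
    rw [exp_split (ne_of_gt hu), pow_zero, inv_one, one_mul, ← mul_assoc, ← Real.exp_add]
    norm_num
  have hYint : IntegrableOn (fun u => (u^2)⁻¹ * rexp (-(r*u - a/(2*u))^2)) (Set.Ioi 0) := by
    refine IntegrableOn.congr_fun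
      (integrableOn_const_mul_gI ha hr.le (rexp (a*r)) (n := 2) (by omega) (Or.inl (by omega))) ?_
      measurableSet_Ioi
    intro u hu
    have hu : 0 < u := hu
    show rexp (a*r) * gI a r 2 u = (u^2)⁻¹ * rexp (-(r*u - a/(2*u))^2)
    unfold gI
    rw [exp_split (ne_of_gt hu)]
    rw [show rexp (a*r) * ((u^2)⁻¹ * (rexp (-(a*r)) * rexp (-(r*u - a/(2*u))^2)))
        = (rexp (a*r) * rexp (-(a*r))) * ((u^2)⁻¹ * rexp (-(r*u - a/(2*u))^2)) from by ring,
      ← Real.exp_add]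
    norm_num
  -- the master identity
  have hphi := integral_phi_subst ha hr (fun s => rexp (-s^2))
  have hsum : (∫ u in Set.Ioi (0:ℝ), (r + a/(2*u^2)) * rexp (-(r*u - a/(2*u))^2))
      = r * X + (a/2) * Y := by
    rw [hX, hY, ← integral_const_mul, ← integral_const_mul]
    rw [← integral_add (hXint.const_mul r) (hYint.const_mul (a/2))]
    apply setIntegral_congr_fun measurableSet_Ioi
    intro u hu
    have hu : 0 < u := hu
    show (r + a/(2*u^2)) * rexp (-(r*u - a/(2*u))^2)
        = r * rexp (-(r*u - a/(2*u))^2) + a/2 * ((u^2)⁻¹ * rexp (-(r*u - a/(2*u))^2))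
    field_simp
  have hmaster : r * X + (a/2) * Y = Real.sqrt π := by
    rw [← hsum, ← hphi]
    exact gauss_total
  have hXY : X = (a/(2*r)) * Y := XY_relation ha hr
  have haY : a * Y = Real.sqrt π := by
    rw [hXY] at hmaster
    have : r * (a/(2*r) * Y) = (a/2) * Y := by
      field_simp
    linarith
  rw [hY] at haY ⊢
  rw [eq_div_iff (ne_of_gt ha)]
  linarith

lemma J_two_val {a r : ℝ} (ha : 0 < a) (hr : 0 < r) :
    J a r 2 = rexp (-(a*r)) * (Real.sqrt π / a) := by
  unfold J
  have : ∀ u ∈ Set.Ioi (0:ℝ), gI a r 2 u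
      = rexp (-(a*r)) * ((u^2)⁻¹ * rexp (-(r*u - a/(2*u))^2)) := by
    intro u hu
    have hu : 0 < u := hu
    unfold gI
    rw [exp_split (ne_of_gt hu)]
    ring
  rw [setIntegral_congr_fun measurableSet_Ioi this, integral_const_mul, Y_val ha hr]

lemma J_zero_val {a r : ℝ} (ha : 0 < a) (hr : 0 < r) :
    J a r 0 = rexp (-(a*r)) * (Real.sqrt π / (2*r)) := by
  unfold J
  have hcong : ∀ u ∈ Set.Ioi (0:ℝ), gI a r 0 u
      = rexp (-(a*r)) * rexp (-(r*u - a/(2*u))^2) := by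
    intro u hu
    have hu : 0 < u := hu
    unfold gI
    rw [exp_split (ne_of_gt hu), pow_zero]
    ring
  rw [setIntegral_congr_fun measurableSet_Ioi hcong, integral_const_mul, XY_relation ha hr,
    Y_val ha hr]
  have hr' : r ≠ 0 := ne_of_gt hr
  have ha' : a ≠ 0 := ne_of_gt ha
  field_simp

lemma J_two_val_zero {a : ℝ} (ha : 0 < a) : J a 0 2 = Real.sqrt π / a := by
  have hk : (0:ℝ) < a/2 := by positivity
  have h := integral_inv_subst hk (fun v => rexp (-v^2))
  rw [gauss_Ioi] at h
  have hcong : ∀ u ∈ Set.Ioi (0:ℝ),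
      (a/2)/u^2 * rexp (-((a/2)/u)^2) = (a/2) * gI a 0 2 u := by
    intro u hu
    have hu : 0 < u := hu
    unfold gI
    rw [div_div]
    have : (-(a/(2*u))^2 - ((0:ℝ)*u)^2) = -(a/(2*u))^2 := by ring
    rw [this]
    field_simp
  rw [setIntegral_congr_fun measurableSet_Ioi hcong, integral_const_mul] at h
  have e2 : (∫ u in Set.Ioi (0:ℝ), gI a 0 2 u) = J a 0 2 := rfl
  rw [e2] at h
  have ha' : a ≠ 0 := ne_of_gt ha
  field_simp at h ⊢
  linarith

/-- The main closed form. -/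
lemma J_six {a : ℝ} (ha : 0 < a) {r : ℝ} (hr : 0 ≤ r) :
    J a r 6 = 4*Real.sqrt π/a^5 * (rexp (-(a*r)) * (a^2*r^2 + 3*(a*r) + 3)) := by
  have ha' : a ≠ 0 := ne_of_gt ha
  have h4 := J_recursion ha hr 0 (by omega)
  have h6 := J_recursion ha hr 2 (by omega)
  norm_num at h4 h6
  rcases eq_or_lt_of_le hr with h0 | hrpos
  · subst h0
    rw [J_two_val_zero ha] at h4 h6
    norm_num at h4 h6 ⊢
    -- h4 : a^2/2 * J a 0 4 = √π/a ; h6 : a^2/2 * J a 0 6 = 3 * J a 0 4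
    have hJ4 : J a 0 4 = 2*Real.sqrt π/a^3 := by
      field_simp at h4 ⊢
      nlinarith [h4]
    rw [hJ4] at h6
    field_simp at h6 ⊢
    nlinarith [h6]
  · rw [J_two_val ha hrpos, J_zero_val ha hrpos] at h4
    rw [J_two_val ha hrpos] at h6
    have hr' : r ≠ 0 := ne_of_gt hrpos
    have hJ4 : J a r 4 = rexp (-(a*r)) * (2*Real.sqrt π*(1 + a*r)/a^3) := by
      field_simp at h4 ⊢
      nlinarith [h4]
    rw [hJ4] at h6
    field_simp at h6 ⊢
    nlinarith [h6]



lemma matern_quadform_pos {d N : ℕ} (ε : ℝ) (hε : 0 < ε)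
    (x : Fin N → EuclideanSpace ℝ (Fin d)) (hx : Function.Injective x)
    (c : Fin N → ℝ) (hc : c ≠ 0) :
    0 < ∑ i, ∑ j, c i * c j *
      (rexp (-ε * ‖x i - x j‖) * (ε^2*‖x i - x j‖^2 + 3*ε*‖x i - x j‖ + 3)) := by
  classical
  have hπ : (0:ℝ) < Real.sqrt π := Real.sqrt_pos.mpr Real.pi_pos
  set K : ℝ := ε^5/(4*Real.sqrt π) with hK
  have hKpos : 0 < K := by positivity
  have hid : ∀ r : ℝ, 0 ≤ r → rexp (-ε * r) * (ε^2*r^2 + 3*ε*r + 3) = K * J ε r 6 := by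
    intro r hr
    rw [J_six hε hr, hK]
    field_simp
  have hstep1 : ∑ i, ∑ j, c i * c j *
        (rexp (-ε * ‖x i - x j‖) * (ε^2*‖x i - x j‖^2 + 3*ε*‖x i - x j‖ + 3))
      = K * ∑ p : Fin N × Fin N, c p.1 * c p.2 * J ε ‖x p.1 - x p.2‖ 6 := by
    rw [Fintype.sum_prod_type, Finset.mul_sum]
    apply Finset.sum_congr rfl; intro i _
    rw [Finset.mul_sum]
    apply Finset.sum_congr rfl; intro j _
    rw [hid _ (norm_nonneg _)]
    ring
  rw [hstep1]
  apply mul_pos hKpos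
  have hint : ∀ p : Fin N × Fin N, IntegrableOn
      (fun u => c p.1 * c p.2 * gI ε ‖x p.1 - x p.2‖ 6 u) (Set.Ioi 0) :=
    fun p => (integrableOn_gI_two hε (by omega) (by omega)).const_mul _
  set h : ℝ → ℝ := fun u => ∑ p : Fin N × Fin N, c p.1 * c p.2 * gI ε ‖x p.1 - x p.2‖ 6 u with hh
  have hhint : IntegrableOn h (Set.Ioi 0) := integrable_finset_sum _ (fun p _ => hint p)
  have hsum : ∑ p : Fin N × Fin N, c p.1 * c p.2 * J ε ‖x p.1 - x p.2‖ 6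
      = ∫ u in Set.Ioi (0:ℝ), h u := by
    rw [hh, integral_finset_sum _ (fun p _ => hint p)]
    apply Finset.sum_congr rfl; intro p _
    rw [integral_const_mul]
    rfl
  rw [hsum]
  have hpos : ∀ u ∈ Set.Ioi (0:ℝ), 0 < h u := by
    intro u hu
    have hu : 0 < u := hu
    have hgI : ∀ (w : EuclideanSpace ℝ (Fin d)), gI ε ‖w‖ 6 u
        = ((u^6)⁻¹ * rexp (-(ε/(2*u))^2)) * rexp (-(u^2 * ‖w‖^2)) := by
      intro w
      unfold gI
      rw [show -(ε/(2*u))^2 - (‖w‖*u)^2 = (-(ε/(2*u))^2) + (-(u^2 * ‖w‖^2)) from by ring,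
        Real.exp_add]
      ring
    have he : h u = ((u^6)⁻¹ * rexp (-(ε/(2*u))^2)) *
        ∑ i, ∑ j, c i * c j * rexp (-(u^2 * ‖x i - x j‖^2)) := by
      rw [hh]
      beta_reduce
      rw [Fintype.sum_prod_type, Finset.mul_sum]
      apply Finset.sum_congr rfl; intro i _
      rw [Finset.mul_sum]
      apply Finset.sum_congr rfl; intro j _
      rw [hgI]
      ring
    rw [he]
    apply mul_pos (by positivity)
    exact gaussian_quadform_pos x hx c hc (by positivity : (0:ℝ) < u^2)
  have h0le : 0 ≤ᵐ[MeasureTheory.volume.restrict (Set.Ioi (0:ℝ))] h := by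
    refine (ae_restrict_iff' measurableSet_Ioi).mpr ?_
    exact Filter.Eventually.of_forall (fun u hu => by simpa using (hpos u hu).le)
  rw [setIntegral_pos_iff_support_of_nonneg_ae h0le hhint]
  refine lt_of_lt_of_le ?_ (measure_mono
    (show Set.Ioi (0:ℝ) ⊆ Function.support h ∩ Set.Ioi 0 from
      fun u hu => ⟨(hpos u hu).ne', hu⟩))
  rw [Real.volume_Ioi]
  exact ENNReal.zero_lt_top

end MaternProof

open Matrix

/-- The Matérn C⁴ kernel matrix on pairwise distinct points is symmetric positive definite. -/
theorem matern_C4_kernel_matrix_posDef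
    {d N : ℕ} (hd : 1 ≤ d) (ε : ℝ) (hε : 0 < ε)
    (x : Fin N → EuclideanSpace ℝ (Fin d)) (hx : Function.Injective x) :
    (Matrix.of fun i j : Fin N =>
      Real.exp (-ε * ‖x i - x j‖) *
        (ε ^ 2 * ‖x i - x j‖ ^ 2 + 3 * ε * ‖x i - x j‖ + 3)).IsSymm ∧
    (Matrix.of fun i j : Fin N =>
      Real.exp (-ε * ‖x i - x j‖) *
        (ε ^ 2 * ‖x i - x j‖ ^ 2 + 3 * ε * ‖x i - x j‖ + 3)).PosDef := by
  constructor
  · ext i j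
    simp only [Matrix.transpose_apply, Matrix.of_apply]
    rw [norm_sub_rev]
  · refine Matrix.posDef_iff_dotProduct_mulVec.mpr ⟨?_, ?_⟩
    · ext i j
      simp only [Matrix.conjTranspose_apply, Matrix.of_apply, star_trivial]
      rw [norm_sub_rev]
    · intro c hc
      have hquad : star c ⬝ᵥ ((Matrix.of fun i j : Fin N =>
            Real.exp (-ε * ‖x i - x j‖) *
              (ε ^ 2 * ‖x i - x j‖ ^ 2 + 3 * ε * ‖x i - x j‖ + 3)) *ᵥ c)
          = ∑ i, ∑ j, c i * c j * (Real.exp (-ε * ‖x i - x j‖) *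
              (ε^2*‖x i - x j‖^2 + 3*ε*‖x i - x j‖ + 3)) := by
        rw [show star c = c from star_trivial c]
        simp only [dotProduct, Matrix.mulVec, Matrix.of_apply]
        apply Finset.sum_congr rfl
        intro i _
        rw [Finset.mul_sum]
        apply Finset.sum_congr rfl
        intro j _
        ring
      rw [hquad]
      exact MaternProof.matern_quadform_pos ε hε x hx c hc


end
end
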